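/- Let Q be a finite set of points in ℝ², let p, q ∈ Q be distinct, let u be a unit vector with ⟪u, q − p⟫ = 0, and let H = {y : ⟪y − p, u⟫ > 0} be one open side of the line through p and q. Then the set A = {α > 0 : there exists c ∈ H with dist(c, p) = dist(c, q) = α and dist(c, r) ≥ α for all r ∈ Q \ {p, q}} of radii α for which {p, q} admits an empty α-ball centered in H is order-convex: if α₁, α₂ ∈ A and α₁ ≤ β ≤ α₂, then β ∈ A. -/

import Mathlib

open Metric

open RealInnerProductSpace in
lemma inner_expand' (x y : EuclideanSpace ℝ (Fin 2)) :
    ⟪x, y⟫ = x 0 * y 0 + x 1 * y 1 := by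
  simp [PiLp.inner_apply, Fin.sum_univ_two]; ring

open RealInnerProductSpace in
lemma span2 (u v w : EuclideanSpace ℝ (Fin 2)) (hu : ‖u‖ = 1) (huv : ⟪u, v⟫ = 0)
    (hwv : ⟪w, v⟫ = 0) (hv : v ≠ 0) : w = ⟪w, u⟫ • u := by
  have h3 : u 0 * u 0 + u 1 * u 1 = 1 := by
    rw [← inner_expand', real_inner_self_eq_norm_mul_norm, hu]; norm_num
  rw [inner_expand'] at huv hwv
  have hv' : v 0 ≠ 0 ∨ v 1 ≠ 0 := by
    by_contra h; push_neg at h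
    exact hv (by ext i; fin_cases i <;> simp [h.1, h.2])
  have hD : w 0 * u 1 - w 1 * u 0 = 0 := by
    rcases hv' with h | h
    · have hz : v 0 * (w 0 * u 1 - w 1 * u 0) = 0 := by
        linear_combination u 1 * hwv - w 1 * huv
      exact (mul_eq_zero.mp hz).resolve_left h
    · have hz : v 1 * (w 0 * u 1 - w 1 * u 0) = 0 := by
        linear_combination (-(u 0)) * hwv + w 0 * huv
      exact (mul_eq_zero.mp hz).resolve_left h
  have e0 : w 0 = ⟪w, u⟫ * u 0 := by
    rw [inner_expand']; linear_combination (-(w 0)) * h3 + u 1 * hD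
  have e1 : w 1 = ⟪w, u⟫ * u 1 := by
    rw [inner_expand']; linear_combination (-(w 1)) * h3 - u 0 * hD
  ext i
  fin_cases i
  · simpa using e0
  · simpa using e1

noncomputable abbrev Pt : Type := EuclideanSpace ℝ (Fin 2)

/-- The set of radii `α > 0` for which the edge `{p, q}` admits an empty `α`-ball
(with respect to `Q`) centered in the open halfplane `H = {y | ⟪y - p, u⟫ > 0}`. -/
def AlphaRadii (Q : Set Pt) (p q u : Pt) : Set ℝ :=
  {α : ℝ | 0 < α ∧ ∃ c : Pt, (0 : ℝ) < inner ℝ (c - p) u ∧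
    dist c p = α ∧ dist c q = α ∧ ∀ r ∈ Q \ ({p, q} : Set Pt), α ≤ dist c r}

set_option maxHeartbeats 1000000 in
open RealInnerProductSpace in
/-- The set of radii of empty `α`-balls of the edge `{p, q}` centered on
one fixed side of the line through `p` and `q` is order-convex. -/
theorem stmt10 (Q : Set Pt) (hQ : Q.Finite) (p q : Pt)
    (hp : p ∈ Q) (hq : q ∈ Q) (hpq : p ≠ q)
    (u : Pt) (hu : ‖u‖ = 1) (horth : (inner ℝ u (q - p) : ℝ) = 0) :
    ∀ α₁ ∈ AlphaRadii Q p q u, ∀ α₂ ∈ AlphaRadii Q p q u,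
      ∀ β : ℝ, α₁ ≤ β → β ≤ α₂ → β ∈ AlphaRadii Q p q u := by
  intro α₁ h₁ α₂ h₂ β hβ₁ hβ₂
  obtain ⟨hα₁, c₁, hc₁u, hc₁p, hc₁q, hc₁e⟩ := h₁
  obtain ⟨hα₂, c₂, hc₂u, hc₂p, hc₂q, hc₂e⟩ := h₂
  set m : Pt := (2:ℝ)⁻¹ • (p + q) with hm
  have hvne : q - p ≠ 0 := sub_ne_zero.mpr hpq.symm
  have hmp : m - p = (2:ℝ)⁻¹ • (q - p) := by rw [hm]; module
  have hmq : m - q = -((2:ℝ)⁻¹ • (q - p)) := by rw [hm]; module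
  have hqpu : ⟪q - p, u⟫ = 0 := by rw [real_inner_comm]; exact horth
  have hmpu : ⟪m - p, u⟫ = 0 := by
    rw [hmp, real_inner_smul_left, hqpu, mul_zero]
  have hmqu : ⟪m - q, u⟫ = 0 := by
    rw [hmq, inner_neg_left, real_inner_smul_left, hqpu, mul_zero, neg_zero]
  have huu : ⟪u, u⟫ = 1 := by
    rw [real_inner_self_eq_norm_mul_norm, hu]; norm_num
  -- distance expansion along the bisector
  have hdist : ∀ (t : ℝ) (r : Pt),
      dist (m + t • u) r ^ 2 = ‖m - r‖ ^ 2 + 2 * t * ⟪m - r, u⟫ + t ^ 2 := by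
    intro t r
    have e : m + t • u - r = (m - r) + t • u := by module
    rw [dist_eq_norm, e, norm_add_sq_real, real_inner_smul_right, norm_smul, hu,
      mul_one, Real.norm_eq_abs, sq_abs]
    ring
  -- structure of centers
  have key : ∀ (c : Pt) (α : ℝ), (0:ℝ) < ⟪c - p, u⟫ → dist c p = α → dist c q = α →
      ∃ t : ℝ, 0 < t ∧ c = m + t • u ∧ α ^ 2 = ‖m - p‖ ^ 2 + t ^ 2 := by
    intro c α hcu hcp hcq
    have hsq : ‖c - p‖ ^ 2 = ‖c - q‖ ^ 2 := by
      rw [← dist_eq_norm, ← dist_eq_norm, hcp, hcq]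
    have e1 : c - p = (c - m) + (2:ℝ)⁻¹ • (q - p) := by rw [hm]; module
    have e2 : c - q = (c - m) - (2:ℝ)⁻¹ • (q - p) := by rw [hm]; module
    have ha1 := norm_add_sq_real (c - m) ((2:ℝ)⁻¹ • (q - p))
    have ha2 := norm_sub_sq_real (c - m) ((2:ℝ)⁻¹ • (q - p))
    rw [e1, e2, ha1, ha2, real_inner_smul_right] at hsq
    have hw : ⟪c - m, q - p⟫ = 0 := by linarith
    have hcm : c - m = ⟪c - m, u⟫ • u := span2 u (q - p) (c - m) hu horth hw hvne
    set t := ⟪c - m, u⟫ with htdef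
    have ht : t = ⟪c - p, u⟫ := by
      have e3 : c - p = (c - m) + (m - p) := by module
      rw [e3, inner_add_left, hmpu, add_zero]
    have hceq : c = m + t • u := by
      rw [← hcm]; module
    refine ⟨t, by rw [ht]; exact hcu, hceq, ?_⟩
    have hh := hdist t p
    rw [← hceq, hcp, hmpu] at hh
    linarith
  obtain ⟨t₁, ht₁, hc₁eq, hα₁sq⟩ := key c₁ α₁ hc₁u hc₁p hc₁q
  obtain ⟨t₂, ht₂, hc₂eq, hα₂sq⟩ := key c₂ α₂ hc₂u hc₂p hc₂q
  set D : ℝ := ‖m - p‖ ^ 2 with hD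
  have hβpos : 0 < β := lt_of_lt_of_le hα₁ hβ₁
  have hβsq₁ : α₁ ^ 2 ≤ β ^ 2 := pow_le_pow_left₀ hα₁.le hβ₁ 2
  have hβsq₂ : β ^ 2 ≤ α₂ ^ 2 := pow_le_pow_left₀ hβpos.le hβ₂ 2
  have ht₁sq : 0 < t₁ ^ 2 := pow_pos ht₁ 2
  have ht₂sq : 0 < t₂ ^ 2 := pow_pos ht₂ 2
  set tβ : ℝ := Real.sqrt (β ^ 2 - D) with htβdef
  have htβsq : tβ ^ 2 = β ^ 2 - D := Real.sq_sqrt (by linarith)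
  have htβpos : 0 < tβ := Real.sqrt_pos.mpr (by linarith)
  have ht1β : t₁ ≤ tβ := by
    by_contra h
    push_neg at h
    have := pow_lt_pow_left₀ h htβpos.le two_ne_zero
    linarith
  have htβ2 : tβ ≤ t₂ := by
    by_contra h
    push_neg at h
    have := pow_lt_pow_left₀ h ht₂.le two_ne_zero
    linarith
  set cβ : Pt := m + tβ • u with hcβ
  have hdcp : dist cβ p = β := by
    have h := hdist tβ p
    have h2 : dist cβ p ^ 2 = β ^ 2 := by rw [hcβ, h, hmpu]; ring_nf; linarith [htβsq]
    have := congrArg Real.sqrt h2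
    rwa [Real.sqrt_sq dist_nonneg, Real.sqrt_sq hβpos.le] at this
  have hnmq : ‖m - q‖ ^ 2 = D := by
    rw [hD, hmp, hmq, norm_neg]
  have hdcq : dist cβ q = β := by
    have h := hdist tβ q
    have h2 : dist cβ q ^ 2 = β ^ 2 := by rw [hcβ, h, hmqu, hnmq]; ring_nf; linarith [htβsq]
    have := congrArg Real.sqrt h2
    rwa [Real.sqrt_sq dist_nonneg, Real.sqrt_sq hβpos.le] at this
  refine ⟨hβpos, cβ, ?_, hdcp, hdcq, ?_⟩
  · have : ⟪cβ - p, u⟫ = tβ := by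
      have e : cβ - p = (m - p) + tβ • u := by rw [hcβ]; module
      rw [e, inner_add_left, hmpu, real_inner_smul_left, huu]; ring
    rw [show (inner ℝ (cβ - p) u : ℝ) = ⟪cβ - p, u⟫ from rfl, this]
    exact htβpos
  · intro r hr
    have e1 : α₁ ≤ dist c₁ r := hc₁e r hr
    have e2 : α₂ ≤ dist c₂ r := hc₂e r hr
    have f1 : α₁ ^ 2 ≤ dist c₁ r ^ 2 := pow_le_pow_left₀ hα₁.le e1 2
    have f2 : α₂ ^ 2 ≤ dist c₂ r ^ 2 := pow_le_pow_left₀ hα₂.le e2 2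
    rw [hc₁eq, hdist t₁ r] at f1
    rw [hc₂eq, hdist t₂ r] at f2
    have hdr := hdist tβ r
    rw [← hcβ] at hdr
    set a : ℝ := ⟪m - r, u⟫
    set nr : ℝ := ‖m - r‖ ^ 2
    have g1 : D ≤ nr + 2 * t₁ * a := by linarith
    have g2 : D ≤ nr + 2 * t₂ * a := by linarith
    have gβ : D ≤ nr + 2 * tβ * a := by
      rcases le_or_gt 0 a with ha | ha
      · have h' : t₁ * a ≤ tβ * a := mul_le_mul_of_nonneg_right ht1β ha
        linarith
      · have h' : t₂ * a ≤ tβ * a := mul_le_mul_of_nonpos_right htβ2 ha.le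
        linarith
    have hβd : β ^ 2 ≤ dist cβ r ^ 2 := by rw [hdr]; linarith
    calc β = Real.sqrt (β ^ 2) := (Real.sqrt_sq hβpos.le).symm
      _ ≤ Real.sqrt (dist cβ r ^ 2) := Real.sqrt_le_sqrt hβd
      _ = dist cβ r := Real.sqrt_sq dist_nonneg
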